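/- The shadow sequence s(n) = a(n) − b(n) of Motzkin path counts satisfies the recurrence (n+2)·s(n) = (2n+1)·s(n-1) − 5(n-1)·s(n-2) for all n ≥ 2, with s(0) = s(1) = 1. -/

import Mathlib

inductive MStep where
  | U : MStep
  | D : MStep
  | H : MStep
deriving DecidableEq

/-- A word in {U,D,H} is a Motzkin path if #U = #D and no prefix has more D's than U's. -/
def IsMotzkin (w : List MStep) : Prop :=
  w.count MStep.U = w.count MStep.D ∧
  ∀ p : List MStep, p <+: w → p.count MStep.D ≤ p.count MStep.U

/-- Number of Motzkin paths of length n (the n-th Motzkin number). -/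
noncomputable def motzkinNum (n : ℕ) : ℕ :=
  Nat.card {w : List MStep // w.length = n ∧ IsMotzkin w}

/-- Number of Motzkin paths of length n with an even number of U steps. -/
noncomputable def evenMotzkin (n : ℕ) : ℕ :=
  Nat.card {w : List MStep // w.length = n ∧ IsMotzkin w ∧ Even (w.count MStep.U)}

/-- Number of Motzkin paths of length n with an odd number of U steps. -/
noncomputable def oddMotzkin (n : ℕ) : ℕ :=
  Nat.card {w : List MStep // w.length = n ∧ IsMotzkin w ∧ Odd (w.count MStep.U)}

/-- The shadow of the n-th Motzkin number: s(n) = a(n) - b(n). -/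
noncomputable def shadow (n : ℕ) : ℤ :=
  (evenMotzkin n : ℤ) - (oddMotzkin n : ℤ)

/-! ### Auxiliary development -/

open List

instance : DecidablePred IsMotzkin := fun w =>
  decidable_of_iff (w.count MStep.U = w.count MStep.D ∧
      ∀ p ∈ w.inits, p.count MStep.D ≤ p.count MStep.U) (by
    simp only [IsMotzkin, List.mem_inits])

/-- All words of length `n` over `MStep`, as a `Finset`. -/
def allWords : ℕ → Finset (List MStep)
  | 0 => {[]}
  | n + 1 => ((allWords n).image (MStep.U :: ·)) ∪ ((allWords n).image (MStep.D :: ·)) ∪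
      ((allWords n).image (MStep.H :: ·))

lemma mem_allWords {n : ℕ} {w : List MStep} : w ∈ allWords n ↔ w.length = n := by
  induction n generalizing w with
  | zero => simp [allWords, List.length_eq_zero_iff]
  | succ n ih =>
    cases w with
    | nil => simp [allWords]
    | cons a t => cases a <;> simp [allWords, ih]

/-- The Motzkin words of length `n`, as a `Finset`. -/
def motzkinFinset (n : ℕ) : Finset (List MStep) :=
  (allWords n).filter IsMotzkin

lemma mem_motzkinFinset {n : ℕ} {w : List MStep} :
    w ∈ motzkinFinset n ↔ w.length = n ∧ IsMotzkin w := by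
  simp [motzkinFinset, mem_allWords]

lemma natCard_eq_card_filter (n : ℕ) (P : List MStep → Prop) [DecidablePred P] :
    Nat.card {w : List MStep // w.length = n ∧ IsMotzkin w ∧ P w}
      = ((motzkinFinset n).filter P).card := by
  rw [← Fintype.card_coe, ← Nat.card_eq_fintype_card]
  exact Nat.card_congr (Equiv.subtypeEquivRight (fun w => by
    simp [mem_motzkinFinset, and_assoc])).symm

lemma shadow_eq_sum (n : ℕ) :
    shadow n = ∑ w ∈ motzkinFinset n, (-1 : ℤ) ^ (w.count MStep.U) := by
  have hfe : (motzkinFinset n).filter (fun w => Odd (w.count MStep.U))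
      = (motzkinFinset n).filter (fun w => ¬ Even (w.count MStep.U)) :=
    Finset.filter_congr (fun w _ => by simp [Nat.not_even_iff_odd])
  have he : (evenMotzkin n : ℤ)
      = ∑ w ∈ (motzkinFinset n).filter (fun w => Even (w.count MStep.U)),
          (-1 : ℤ) ^ (w.count MStep.U) := by
    rw [Finset.sum_congr rfl (fun w hw => (Finset.mem_filter.mp hw).2.neg_one_pow),
      Finset.sum_const, nsmul_eq_mul, mul_one, evenMotzkin, natCard_eq_card_filter]
  have ho : (oddMotzkin n : ℤ)
      = -∑ w ∈ (motzkinFinset n).filter (fun w => ¬ Even (w.count MStep.U)),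
          (-1 : ℤ) ^ (w.count MStep.U) := by
    rw [Finset.sum_congr rfl
        (fun w hw => (Nat.not_even_iff_odd.mp (Finset.mem_filter.mp hw).2).neg_one_pow),
      Finset.sum_const, smul_neg, nsmul_eq_mul, mul_one, neg_neg, oddMotzkin,
      natCard_eq_card_filter, hfe]
  rw [shadow, he, ho, sub_neg_eq_add,
    Finset.sum_filter_add_sum_filter_not (motzkinFinset n) (fun w => Even (w.count MStep.U))]

lemma isMotzkin_iff_take (w : List MStep) :
    IsMotzkin w ↔ w.count MStep.U = w.count MStep.D ∧
      ∀ i, (w.take i).count MStep.D ≤ (w.take i).count MStep.U := by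
  unfold IsMotzkin
  refine and_congr_right fun _ => ⟨fun h i => h _ (take_prefix i w), fun h p hp => ?_⟩
  rw [List.prefix_iff_eq_take.mp hp]
  exact h _

lemma isMotzkin_nil : IsMotzkin ([] : List MStep) := by
  rw [isMotzkin_iff_take]
  simp

lemma isMotzkin_H_cons {w : List MStep} : IsMotzkin (MStep.H :: w) ↔ IsMotzkin w := by
  rw [isMotzkin_iff_take, isMotzkin_iff_take]
  constructor
  · rintro ⟨h1, h2⟩
    refine ⟨by simpa using h1, fun i => by simpa using h2 (i + 1)⟩
  · rintro ⟨h1, h2⟩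
    refine ⟨by simpa using h1, fun i => ?_⟩
    cases i with
    | zero => simp
    | succ i => simpa using h2 i

lemma isMotzkin_UD {u v : List MStep} (hu : IsMotzkin u) (hv : IsMotzkin v) :
    IsMotzkin (MStep.U :: u ++ MStep.D :: v) := by
  rw [isMotzkin_iff_take] at hu hv ⊢
  obtain ⟨hu1, hu2⟩ := hu
  obtain ⟨hv1, hv2⟩ := hv
  constructor
  · simp only [List.count_append, List.count_cons, List.cons_append]
    simp [hu1, hv1]
    omega
  · intro i
    cases i with
    | zero => simp
    | succ i =>
      rw [List.cons_append, List.take_succ_cons, List.take_append]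
      by_cases hle : i ≤ u.length
      · have hz : i - u.length = 0 := by omega
        rw [hz]
        have := hu2 i
        simp [List.count_cons, List.count_append]
        omega
      · have htu : u.take i = u := List.take_of_length_le (by omega)
        obtain ⟨m, hm⟩ : ∃ m, i - u.length = m + 1 := ⟨i - u.length - 1, by omega⟩
        rw [hm, htu, List.take_succ_cons]
        have := hv2 m
        simp [List.count_cons, List.count_append]
        omega

lemma motzkin_unique_aux {u u' v v' : List MStep} (hu : IsMotzkin u) (hu' : IsMotzkin u')
    (h : u ++ MStep.D :: v = u' ++ MStep.D :: v') (hlt : u.length < u'.length) : False := by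
  have h1 : (u ++ [MStep.D]) <+: (u' ++ MStep.D :: v') := by
    rw [← h]
    exact ⟨v, by simp⟩
  have h2 : (u ++ [MStep.D]) <+: u' :=
    List.prefix_of_prefix_length_le h1 (u'.prefix_append _) (by simp; omega)
  have h3 := hu'.2 _ h2
  have h4 := hu.1
  simp [List.count_append] at h3
  omega

lemma motzkin_unique {u u' v v' : List MStep} (hu : IsMotzkin u) (hu' : IsMotzkin u')
    (h : u ++ MStep.D :: v = u' ++ MStep.D :: v') : u = u' ∧ v = v' := by
  have hlen : u.length = u'.length := by
    rcases Nat.lt_trichotomy u.length u'.length with hlt | heq | hgt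
    · exact (motzkin_unique_aux hu hu' h hlt).elim
    · exact heq
    · exact (motzkin_unique_aux hu' hu h.symm hgt).elim
  have hu_eq : u = u' := by
    have p1 : u <+: u' ++ MStep.D :: v' := by
      rw [← h]
      exact u.prefix_append _
    exact (List.prefix_of_prefix_length_le p1 (u'.prefix_append _) hlen.le).eq_of_length hlen
  subst hu_eq
  have := List.append_cancel_left h
  exact ⟨rfl, by simpa using this⟩

lemma motzkin_decomp {w : List MStep} (hw : IsMotzkin w) (hne : w ≠ []) :
    (∃ v, IsMotzkin v ∧ w = MStep.H :: v) ∨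
    (∃ u v, IsMotzkin u ∧ IsMotzkin v ∧ w = MStep.U :: u ++ MStep.D :: v) := by
  cases w with
  | nil => exact absurd rfl hne
  | cons a t =>
    cases a
    case H => exact Or.inl ⟨t, isMotzkin_H_cons.mp hw, rfl⟩
    case D =>
      have := hw.2 [MStep.D] ⟨t, rfl⟩
      simp at this
    case U =>
      right
      rw [isMotzkin_iff_take] at hw
      obtain ⟨hc, hp⟩ := hw
      have hct : t.count MStep.D = t.count MStep.U + 1 := by
        simp [List.count_cons] at hc
        omega
      have hpt : ∀ i, (t.take i).count MStep.D ≤ (t.take i).count MStep.U + 1 := by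
        intro i
        have := hp (i + 1)
        rw [List.take_succ_cons] at this
        simp [List.count_cons] at this
        omega
      have hex : ∃ j, (t.take j).count MStep.D = (t.take j).count MStep.U + 1 :=
        ⟨t.length, by simpa using hct⟩
      classical
      have hj := Nat.find_spec hex
      have hmin : ∀ i, i < Nat.find hex →
          (t.take i).count MStep.D ≠ (t.take i).count MStep.U + 1 :=
        fun i hi => Nat.find_min hex hi
      have hjle : Nat.find hex ≤ t.length := Nat.find_min' hex (by simpa using hct)
      have hj0 : Nat.find hex ≠ 0 := by
        intro h0
        rw [h0] at hj
        simp at hj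
      obtain ⟨m, hm⟩ : ∃ m, Nat.find hex = m + 1 := ⟨Nat.find hex - 1, by omega⟩
      rw [hm] at hj hmin hjle
      have hmlt : m < t.length := by omega
      have htake : t.take (m + 1) = t.take m ++ [t[m]] := by
        rw [List.take_succ, List.getElem?_eq_getElem hmlt]
        rfl
      have hm1 : (t.take m).count MStep.D ≤ (t.take m).count MStep.U := by
        have h1 := hmin m (by omega)
        have h2 := hpt m
        omega
      rw [htake] at hj
      have hD1 : t[m] = MStep.D := by
        cases hi : t[m]
        · rw [hi] at hj
          simp [List.count_append, List.count_cons] at hj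
          omega
        · rfl
        · rw [hi] at hj
          simp [List.count_append, List.count_cons] at hj
          omega
      rw [hD1] at hj
      have hD2 : (t.take m).count MStep.D = (t.take m).count MStep.U := by
        simp [List.count_append, List.count_cons] at hj
        omega
      have hlu : (t.take m).length = m := by
        rw [List.length_take]
        omega
      have ht_eq : t = t.take m ++ MStep.D :: t.drop (m + 1) := by
        conv_lhs => rw [← List.take_append_drop m t]
        congr 1
        rw [List.drop_eq_getElem_cons hmlt, hD1]
      refine ⟨t.take m, t.drop (m + 1), ?_, ?_, by rw [List.cons_append, ← ht_eq]⟩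
      · rw [isMotzkin_iff_take]
        refine ⟨hD2.symm, fun i => ?_⟩
        rw [List.take_take]
        have h1 := hpt (min i m)
        rcases Nat.lt_or_ge (min i m) (m + 1) with hlt | hge
        · rcases Nat.eq_or_lt_of_le (Nat.lt_succ_iff.mp hlt) with heq | hlt'
          · rw [heq]
            omega
          · have := hmin (min i m) (by omega)
            omega
        · omega
      · rw [isMotzkin_iff_take]
        constructor
        · have := congrArg (fun l => (l.count MStep.U, l.count MStep.D)) ht_eq
          simp [List.count_append, List.count_cons] at this
          omega
        · intro i
          have h1 := hpt (m + 1 + i)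
          rw [ht_eq, List.take_append,
            List.take_of_length_le (by rw [hlu]; omega), hlu,
            show m + 1 + i - m = i + 1 by omega, List.take_succ_cons] at h1
          simp [List.count_append, List.count_cons] at h1
          omega

lemma motzkinFinset_succ_succ (n : ℕ) :
    motzkinFinset (n + 2) =
      ((motzkinFinset (n + 1)).image (MStep.H :: ·)) ∪
      (Finset.range (n + 1)).biUnion (fun k =>
        ((motzkinFinset k ×ˢ motzkinFinset (n - k)).image
          (fun p => MStep.U :: p.1 ++ MStep.D :: p.2))) := by
  ext w
  simp only [Finset.mem_union, Finset.mem_biUnion, Finset.mem_image, Finset.mem_product,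
    mem_motzkinFinset, Finset.mem_range, Prod.exists]
  constructor
  · rintro ⟨hlen, hM⟩
    rcases motzkin_decomp hM (by rintro rfl; simp at hlen) with ⟨v, hv, rfl⟩ | ⟨u, v, hu, hv, rfl⟩
    · exact Or.inl ⟨v, ⟨by simpa using hlen, hv⟩, rfl⟩
    · right
      have hlu : u.length + (v.length + 1) = n + 1 := by
        simpa using hlen
      exact ⟨u.length, by omega, u, v, ⟨⟨rfl, hu⟩, ⟨by omega, hv⟩⟩, rfl⟩
  · rintro (⟨v, ⟨hl, hv⟩, rfl⟩ | ⟨k, hk, u, v, ⟨⟨hlu, hu⟩, ⟨hlv, hv⟩⟩, rfl⟩)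
    · exact ⟨by simp [hl], isMotzkin_H_cons.mpr hv⟩
    · refine ⟨?_, isMotzkin_UD hu hv⟩
      simp only [List.cons_append, List.length_cons, List.length_append]
      omega

lemma sum_motzkin_succ_succ (n : ℕ) (f : List MStep → ℤ) :
    ∑ w ∈ motzkinFinset (n + 2), f w =
      (∑ v ∈ motzkinFinset (n + 1), f (MStep.H :: v)) +
      ∑ k ∈ Finset.range (n + 1), ∑ u ∈ motzkinFinset k, ∑ v ∈ motzkinFinset (n - k),
        f (MStep.U :: u ++ MStep.D :: v) := by
  have hdisj : Disjoint ((motzkinFinset (n + 1)).image (MStep.H :: ·))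
      ((Finset.range (n + 1)).biUnion (fun k =>
        ((motzkinFinset k ×ˢ motzkinFinset (n - k)).image
          (fun p => MStep.U :: p.1 ++ MStep.D :: p.2)))) := by
    rw [Finset.disjoint_left]
    rintro w hw1 hw2
    obtain ⟨v, -, rfl⟩ := Finset.mem_image.mp hw1
    obtain ⟨k, -, hk2⟩ := Finset.mem_biUnion.mp hw2
    obtain ⟨p, -, hp⟩ := Finset.mem_image.mp hk2
    rw [List.cons_append] at hp
    exact absurd (List.head_eq_of_cons_eq hp) (by simp)
  have hpair : (↑(Finset.range (n + 1)) : Set ℕ).PairwiseDisjoint (fun k =>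
      ((motzkinFinset k ×ˢ motzkinFinset (n - k)).image
        (fun p : List MStep × List MStep => MStep.U :: p.1 ++ MStep.D :: p.2))) := by
    intro k _ k' _ hne
    rw [Function.onFun, Finset.disjoint_left]
    rintro w hw1 hw2
    obtain ⟨⟨u, v⟩, hm1, hp1⟩ := Finset.mem_image.mp hw1
    obtain ⟨⟨u', v'⟩, hm2, hp2⟩ := Finset.mem_image.mp hw2
    obtain ⟨hu, hv⟩ := Finset.mem_product.mp hm1
    obtain ⟨hu', hv'⟩ := Finset.mem_product.mp hm2
    rw [← hp2, List.cons_append, List.cons_append] at hp1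
    have heq := List.tail_eq_of_cons_eq hp1
    have := (motzkin_unique (mem_motzkinFinset.mp hu).2 (mem_motzkinFinset.mp hu').2 heq).1
    apply hne
    rw [← (mem_motzkinFinset.mp hu).1, ← (mem_motzkinFinset.mp hu').1, this]
  rw [motzkinFinset_succ_succ, Finset.sum_union hdisj, Finset.sum_biUnion hpair]
  congr 1
  · rw [Finset.sum_image (fun a _ b _ h => by simpa using h)]
  · refine Finset.sum_congr rfl fun k hk => ?_
    rw [Finset.sum_image, Finset.sum_product]
    rintro ⟨u, v⟩ hm1 ⟨u', v'⟩ hm2 hp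
    obtain ⟨hu, hv⟩ := Finset.mem_product.mp hm1
    obtain ⟨hu', hv'⟩ := Finset.mem_product.mp hm2
    simp only [List.cons_append] at hp
    have heq := List.tail_eq_of_cons_eq hp
    have := motzkin_unique (mem_motzkinFinset.mp hu).2 (mem_motzkinFinset.mp hu').2 heq
    exact Prod.ext this.1 this.2

lemma shadow_conv (n : ℕ) :
    shadow (n + 2) = shadow (n + 1) - ∑ k ∈ Finset.range (n + 1), shadow k * shadow (n - k) := by
  rw [shadow_eq_sum, sum_motzkin_succ_succ]
  have h1 : (∑ v ∈ motzkinFinset (n + 1), (-1 : ℤ) ^ ((MStep.H :: v).count MStep.U))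
      = shadow (n + 1) := by
    rw [shadow_eq_sum]
    exact Finset.sum_congr rfl fun v _ => by simp [List.count_cons]
  have h2 : ∀ k, (∑ u ∈ motzkinFinset k, ∑ v ∈ motzkinFinset (n - k),
      (-1 : ℤ) ^ ((MStep.U :: u ++ MStep.D :: v).count MStep.U))
      = -(shadow k * shadow (n - k)) := by
    intro k
    have : ∀ u v : List MStep,
        (-1 : ℤ) ^ ((MStep.U :: u ++ MStep.D :: v).count MStep.U)
          = -((-1 : ℤ) ^ (u.count MStep.U) * (-1 : ℤ) ^ (v.count MStep.U)) := by
      intro u v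
      have hc : (MStep.U :: u ++ MStep.D :: v).count MStep.U
          = u.count MStep.U + v.count MStep.U + 1 := by
        simp [List.count_cons, List.count_append]
      rw [hc, pow_succ, pow_add]
      ring
    simp_rw [this, Finset.sum_neg_distrib]
    rw [← Finset.sum_mul_sum, shadow_eq_sum, shadow_eq_sum]
  simp_rw [h1, h2, Finset.sum_neg_distrib]
  ring

lemma shadow_zero : shadow 0 = 1 := by
  rw [shadow_eq_sum]
  decide

lemma shadow_one : shadow 1 = 1 := by
  rw [shadow_eq_sum]
  decide

lemma shadow_two : shadow 2 = 0 := by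
  rw [shadow_eq_sum]
  decide

/-! ### Power series argument -/

open PowerSeries

/-- Generating function of the shadow sequence, over `ℚ`. -/
noncomputable def Sgf : PowerSeries ℚ := PowerSeries.mk (fun n => (shadow n : ℚ))

lemma Sgf_eq : Sgf = 1 + X * Sgf - X * (X * (Sgf * Sgf)) := by
  ext n
  simp only [map_add, map_sub]
  match n with
  | 0 =>
    rw [coeff_zero_X_mul, coeff_zero_X_mul]
    simp [Sgf, coeff_mk, shadow_zero, coeff_zero_one]
  | 1 =>
    rw [coeff_succ_X_mul 0 Sgf, coeff_succ_X_mul 0 (X * (Sgf * Sgf)), coeff_zero_X_mul]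
    simp [Sgf, coeff_mk, shadow_zero, shadow_one, coeff_one]
  | (n + 2) =>
    rw [coeff_succ_X_mul (n + 1) Sgf, coeff_succ_X_mul (n + 1) (X * (Sgf * Sgf)),
      coeff_succ_X_mul n (Sgf * Sgf), coeff_mul]
    simp only [Sgf, coeff_mk, coeff_one]
    rw [Finset.Nat.sum_antidiagonal_eq_sum_range_succ
      (fun i j => ((shadow i : ℚ)) * ((shadow j : ℚ)))]
    have h := shadow_conv n
    have h' : ((shadow (n + 2) : ℤ) : ℚ) = ((shadow (n + 1) : ℤ) : ℚ)
        - ∑ k ∈ Finset.range (n + 1), ((shadow k : ℤ) : ℚ) * ((shadow (n - k) : ℤ) : ℚ) := by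
      exact_mod_cast congrArg (fun z : ℤ => (z : ℚ)) h
    rw [if_neg (by omega)]
    rw [h']
    ring

lemma Sgf_deriv :
    2 * X * Sgf ^ 2 + 2 * (X ^ 2) * Sgf * (d⁄dX ℚ Sgf) - Sgf + (1 - X) * (d⁄dX ℚ Sgf) = 0 := by
  have h := congrArg (fun f => d⁄dX ℚ f) Sgf_eq
  simp only [map_add, map_sub, Derivation.leibniz, derivative_X, smul_eq_mul, mul_one, one_mul,
    Derivation.map_one_eq_zero, add_zero, zero_add] at h
  linear_combination h

lemma Sgf_ode :
    X * (1 - 2 * X + 5 * X ^ 2) * (d⁄dX ℚ Sgf) + (2 - 3 * X + 5 * X ^ 2) * Sgf = 2 := by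
  linear_combination (2 - 4 * X ^ 2 * Sgf - 4 * X ^ 3 * (d⁄dX ℚ Sgf)) * Sgf_eq
    + (2 * X ^ 3 * Sgf + X - X ^ 2) * Sgf_deriv

lemma shadow_linrec (m : ℕ) :
    ((m : ℚ) + 5) * (shadow (m + 3) : ℚ)
      = (2 * (m : ℚ) + 7) * (shadow (m + 2) : ℚ) - 5 * ((m : ℚ) + 2) * (shadow (m + 1) : ℚ) := by
  have h : X * (d⁄dX ℚ Sgf) + (-2 : ℚ) • (X * (X * (d⁄dX ℚ Sgf)))
      + (5 : ℚ) • (X * (X * (X * (d⁄dX ℚ Sgf)))) + (2 : ℚ) • Sgf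
      + (-3 : ℚ) • (X * Sgf) + (5 : ℚ) • (X * (X * Sgf)) = 2 := by
    have hs : ∀ (q : ℚ) (f : PowerSeries ℚ), q • f = PowerSeries.C q * f := fun q f => by
      rw [PowerSeries.smul_eq_C_mul]
    rw [hs, hs, hs, hs, hs]
    have c2 : PowerSeries.C (2 : ℚ) = (2 : PowerSeries ℚ) := by
      simp [map_ofNat]
    have c3 : PowerSeries.C (-3 : ℚ) = (-3 : PowerSeries ℚ) := by
      rw [map_neg]
      simp [map_ofNat]
    have c5 : PowerSeries.C (5 : ℚ) = (5 : PowerSeries ℚ) := by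
      simp [map_ofNat]
    have cm2 : PowerSeries.C (-2 : ℚ) = (-2 : PowerSeries ℚ) := by
      rw [map_neg]
      simp [map_ofNat]
    rw [c2, c3, c5, cm2]
    linear_combination Sgf_ode
  have hc := congrArg (fun f => PowerSeries.coeff (m + 3) f) h
  simp only [map_add, map_smul] at hc
  rw [coeff_succ_X_mul (m + 2) (d⁄dX ℚ Sgf),
    coeff_succ_X_mul (m + 2) (X * (d⁄dX ℚ Sgf)),
    coeff_succ_X_mul (m + 1) (d⁄dX ℚ Sgf),
    coeff_succ_X_mul (m + 2) (X * (X * (d⁄dX ℚ Sgf))),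
    coeff_succ_X_mul (m + 1) (X * (d⁄dX ℚ Sgf)),
    coeff_succ_X_mul m (d⁄dX ℚ Sgf),
    coeff_succ_X_mul (m + 2) Sgf,
    coeff_succ_X_mul (m + 2) (X * Sgf),
    coeff_succ_X_mul (m + 1) Sgf,
    coeff_derivative, coeff_derivative, coeff_derivative] at hc
  have h2 : PowerSeries.coeff (m + 3) (2 : PowerSeries ℚ) = 0 := by
    rw [show (2 : PowerSeries ℚ) = PowerSeries.C 2 by simp [map_ofNat], PowerSeries.coeff_C]
    simp
  rw [h2] at hc
  simp only [Sgf, coeff_mk, smul_eq_mul] at hc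
  push_cast at hc ⊢
  linarith

theorem stmt_11 :
    shadow 0 = 1 ∧ shadow 1 = 1 ∧
    ∀ n : ℕ, 2 ≤ n →
      ((n : ℤ) + 2) * shadow n =
        (2 * (n : ℤ) + 1) * shadow (n - 1) - 5 * ((n : ℤ) - 1) * shadow (n - 2) := by
  refine ⟨shadow_zero, shadow_one, fun n hn => ?_⟩
  match n, hn with
  | 2, _ => norm_num [shadow_two, shadow_one, shadow_zero]
  | (m + 3), _ =>
    have h := shadow_linrec m
    have : ((m : ℕ) + 3 - 1) = m + 2 := rfl
    rw [this]
    have : ((m : ℕ) + 3 - 2) = m + 1 := rfl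
    rw [this]
    have := shadow_linrec m
    apply @Int.cast_injective ℚ
    push_cast
    push_cast at this
    linarith
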